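/- Let K and M be closed subspaces of a complex Hilbert space E. Then the powers (P_K ∘ P_M)ⁿ converge in the weak operator topology to the orthogonal projection onto K ⊓ M: for all φ, ψ ∈ E, the inner products ⟪φ, (P_K ∘ P_M)ⁿ ψ⟫ converge to ⟪φ, P_{K ⊓ M} ψ⟫ as n → ∞. -/

import Mathlib

variable {E : Type*} [NormedAddCommGroup E] [InnerProductSpace ℂ E] [CompleteSpace E]

/-- Orthogonal projection onto (the topological closure of) a submodule, as a
continuous linear operator on `E`. For a closed subspace `K` this is the
orthogonal projection `P_K` onto `K` itself. -/
noncomputable def proj (K : Submodule ℂ E) : E →L[ℂ] E :=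
  K.topologicalClosure.subtypeL.comp (K.topologicalClosure.orthogonalProjectionOnto)

lemma proj_mem (K : Submodule ℂ E) (x : E) : proj K x ∈ K.topologicalClosure :=
  (K.topologicalClosure.orthogonalProjectionOnto x).2

lemma proj_eq_self (K : Submodule ℂ E) {x : E} (hx : x ∈ K.topologicalClosure) :
    proj K x = x := by
  exact (Submodule.starProjection_eq_self_iff (K := K.topologicalClosure)).2 hx

lemma proj_idem (K : Submodule ℂ E) (x : E) : proj K (proj K x) = proj K x :=
  proj_eq_self K (proj_mem K x)

lemma proj_inner (K : Submodule ℂ E) (x y : E) :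
    (inner ℂ (proj K x) y : ℂ) = inner ℂ x (proj K y) :=
  Submodule.inner_starProjection_left_eq_right (K := K.topologicalClosure) x y

lemma norm_proj_le (K : Submodule ℂ E) (x : E) : ‖proj K x‖ ≤ ‖x‖ := by
  simpa [proj] using Submodule.orthogonalProjectionOnto_norm_le K.topologicalClosure |>.trans (le_refl 1) |> fun h => (K.topologicalClosure.orthogonalProjectionOnto).le_of_opNorm_le h x

lemma proj_eq_self_of_norm (K : Submodule ℂ E) {x : E} (h : ‖proj K x‖ = ‖x‖) :
    proj K x = x := by
  have horth : (inner ℂ (proj K x) (x - proj K x) : ℂ) = 0 :=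
    Submodule.sub_starProjection_mem_orthogonal (K := K.topologicalClosure) x _ (proj_mem K x)
  have hsq := norm_add_sq_eq_norm_sq_add_norm_sq_of_inner_eq_zero (proj K x) (x - proj K x) horth
  rw [add_sub_cancel] at hsq
  rw [h] at hsq
  have h0 : ‖x - proj K x‖ = 0 := mul_self_eq_zero.mp (by linarith)
  exact (sub_eq_zero.mp (norm_eq_zero.mp h0)).symm

open Filter in
theorem stmt17 (K M : Submodule ℂ E)
    (hK : IsClosed (K : Set E)) (hM : IsClosed (M : Set E)) (φ ψ : E) :
    Filter.Tendsto (fun n : ℕ => (inner ℂ φ (((proj K ∘L proj M) ^ n) ψ) : ℂ))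
      Filter.atTop (nhds (inner ℂ φ (proj (K ⊓ M) ψ) : ℂ)) := by
  set P := proj K with hPdef
  set Q := proj M with hQdef
  set S : E →L[ℂ] E := (Q * P) * Q with hSdef
  have hSapp : ∀ x : E, S x = Q (P (Q x)) := fun x => rfl
  have hq : ∀ x, Q (Q x) = Q x := proj_idem M
  have hp : ∀ x, P (P x) = P x := proj_idem K
  -- S kills a leading Q
  have hSQ : ∀ x, S (Q x) = S x := by intro x; simp [hSapp, hq]
  have hpow_succ : ∀ (n : ℕ) (x : E), (S ^ (n + 1)) x = (S ^ n) (S x) := by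
    intro n x; rw [pow_succ]; rfl
  have hpow_succ' : ∀ (n : ℕ) (x : E), (S ^ (n + 1)) x = S ((S ^ n) x) := by
    intro n x; rw [pow_succ']; rfl
  have hpowQ : ∀ (n : ℕ) (x : E), (S ^ (n + 1)) (Q x) = (S ^ (n + 1)) x := by
    intro n x; rw [hpow_succ, hpow_succ, hSQ]
  -- self-adjointness of S and its powers
  have hSA : ∀ x y : E, (inner ℂ (S x) y : ℂ) = inner ℂ x (S y) := by
    intro x y
    rw [hSapp, hSapp, proj_inner M, proj_inner K, proj_inner M]
  have h1 : ∀ (n : ℕ) (x y : E), (inner ℂ ((S ^ n) x) y : ℂ) = inner ℂ x ((S ^ n) y) := by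
    intro n
    induction n with
    | zero => intro x y; simp
    | succ n ih =>
      intro x y
      rw [hpow_succ', hpow_succ, hSA, ih]
  -- the scalar sequence
  set a : ℕ → ℝ := fun n => RCLike.re (inner ℂ ψ ((S ^ n) ψ) : ℂ) with hadef
  set y : ℕ → E := fun n => (S ^ n) ψ with hydef
  have hyS : ∀ n, y (n + 1) = S (y n) := fun n => hpow_succ' n ψ
  have heven : ∀ n, a (2 * n) = ‖y n‖ ^ 2 := by
    intro n
    have e : (S ^ (2 * n)) ψ = (S ^ n) ((S ^ n) ψ) := by rw [two_mul, pow_add]; rfl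
    have h2 : (inner ℂ ψ ((S ^ (2 * n)) ψ) : ℂ) = inner ℂ (y n) (y n) := by
      rw [e, hydef]; exact (h1 n _ _).symm
    simp only [hadef, hydef] at h2 ⊢
    rw [h2]
    exact inner_self_eq_norm_sq _
  have hodd : ∀ n, a (2 * n + 1) = ‖P (Q (y n))‖ ^ 2 := by
    intro n
    have e : (S ^ (2 * n + 1)) ψ = (S ^ n) (S ((S ^ n) ψ)) := by
      have h25 : 2 * n + 1 = n + (n + 1) := by ring
      rw [h25, pow_add]
      show (S ^ n) ((S ^ (n+1)) ψ) = _
      rw [hpow_succ']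
    have h2 : (inner ℂ ψ ((S ^ (2 * n + 1)) ψ) : ℂ) = inner ℂ (y n) (S (y n)) := by
      rw [e, hydef]; exact (h1 n _ _).symm
    have h3 : (inner ℂ (y n) (S (y n)) : ℂ) = inner ℂ (P (Q (y n))) (P (Q (y n))) := by
      rw [hSapp, ← proj_inner M, ← hp (Q (y n)), ← proj_inner K, hp]
    simp only [hadef, hydef] at h2 h3 ⊢
    rw [h2, h3]
    exact inner_self_eq_norm_sq _
  have hanti : Antitone a := by
    apply antitone_nat_of_succ_le
    intro n
    rcases Nat.even_or_odd n with ⟨m, hm⟩ | ⟨m, hm⟩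
    · subst hm
      rw [show m + m = 2 * m by ring, hodd m, heven m]
      have h4 : ‖P (Q (y m))‖ ≤ ‖y m‖ :=
        (norm_proj_le K _).trans (norm_proj_le M _)
      exact pow_le_pow_left₀ (norm_nonneg _) h4 2
    · subst hm
      rw [show 2 * m + 1 + 1 = 2 * (m + 1) by ring, heven (m+1), hodd m, hyS m, hSapp]
      exact pow_le_pow_left₀ (norm_nonneg _) (norm_proj_le M _) 2
  have hpos : ∀ n, 0 ≤ a n := by
    intro n
    rcases Nat.even_or_odd n with ⟨m, hm⟩ | ⟨m, hm⟩
    · subst hm; rw [show m + m = 2 * m by ring, heven]; positivity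
    · subst hm; rw [hodd]; positivity
  have hconv : ∃ c, Tendsto a atTop (nhds c) :=
    ⟨_, tendsto_atTop_ciInf hanti ⟨0, fun _ ⟨n, hn⟩ => hn ▸ hpos n⟩⟩
  obtain ⟨c, hc⟩ := hconv
  have hcauchy_a : CauchySeq a := hc.cauchySeq
  -- ‖y n - y m‖ ^ 2 = a (2n) + a (2m) - 2 a (n+m)
  have hns : ∀ n m, ‖y n - y m‖ ^ 2 = a (2*n) + a (2*m) - 2 * a (n + m) := by
    intro n m
    have hre : RCLike.re (inner ℂ (y n) (y m) : ℂ) = a (n + m) := by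
      rw [hadef]; congr 1
      rw [hydef, h1 n ψ, ← ContinuousLinearMap.comp_apply]
      congr 2
      rw [← ContinuousLinearMap.mul_def, ← pow_add]
    rw [heven, heven, norm_sub_sq (𝕜 := ℂ), hre]; ring
  have hy_cauchy : CauchySeq y := by
    rw [Metric.cauchySeq_iff]
    intro ε hε
    obtain ⟨N, hN⟩ := Metric.cauchySeq_iff.mp hcauchy_a (ε ^ 2 / 2) (by positivity)
    refine ⟨N, fun m hm n hn => ?_⟩
    have e1 := hN (2*m) (by omega) (m+n) (by omega)
    have e2 := hN (2*n) (by omega) (m+n) (by omega)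
    rw [Real.dist_eq] at e1 e2
    have : ‖y m - y n‖ ^ 2 < ε ^ 2 := by
      rw [hns m n]
      have := abs_lt.mp e1
      have := abs_lt.mp e2
      linarith [abs_lt.mp e1, abs_lt.mp e2]
    rw [dist_eq_norm]
    exact lt_of_pow_lt_pow_left₀ 2 hε.le this
  obtain ⟨L, hL⟩ := cauchySeq_tendsto_of_complete hy_cauchy
  -- S L = L
  have hSL : S L = L := by
    have h5 : Tendsto (fun n => y (n + 1)) atTop (nhds L) :=
      hL.comp (tendsto_add_atTop_nat 1)
    have h6 : Tendsto (fun n => S (y n)) atTop (nhds (S L)) :=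
      (S.continuous.tendsto L).comp hL
    simp only [← hyS] at h6
    exact tendsto_nhds_unique h6 h5
  -- L ∈ M and L ∈ K
  have hchain : ‖L‖ ≤ ‖Q L‖ := by
    calc ‖L‖ = ‖S L‖ := by rw [hSL]
    _ ≤ ‖P (Q L)‖ := by rw [hSapp]; exact norm_proj_le M _
    _ ≤ ‖Q L‖ := norm_proj_le K _
  have hQL : Q L = L :=
    proj_eq_self_of_norm M (le_antisymm (norm_proj_le M L) hchain)
  have hPL : P L = L := by
    apply proj_eq_self_of_norm K
    apply le_antisymm (norm_proj_le K L)
    calc ‖L‖ = ‖S L‖ := by rw [hSL]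
    _ = ‖Q (P L)‖ := by rw [hSapp, hQL]
    _ ≤ ‖P L‖ := norm_proj_le M _
  have hLK : L ∈ K := by
    rw [← hK.submodule_topologicalClosure_eq, ← hPL]; exact proj_mem K L
  have hLM : L ∈ M := by
    rw [← hM.submodule_topologicalClosure_eq, ← hQL]; exact proj_mem M L
  -- ψ - L ⊥ K ⊓ M
  have hperp : ∀ z, z ∈ K ⊓ M → (inner ℂ (ψ - L) z : ℂ) = 0 := by
    intro z hz
    have hQz : Q z = z := proj_eq_self M (M.le_topologicalClosure hz.2)
    have hPz : P z = z := proj_eq_self K (K.le_topologicalClosure hz.1)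
    have hSz : ∀ n, (S ^ n) z = z := by
      intro n
      induction n with
      | zero => rfl
      | succ n ih => rw [hpow_succ', ih, hSapp, hQz, hPz, hQz]
    have h7 : ∀ n, (inner ℂ z (y n) : ℂ) = inner ℂ z ψ := by
      intro n; rw [hydef, ← h1 n z ψ, hSz]
    have h8 : Tendsto (fun n => (inner ℂ z (y n) : ℂ)) atTop (nhds (inner ℂ z L)) :=
      Filter.Tendsto.inner tendsto_const_nhds hL
    simp only [h7] at h8
    have h9 : (inner ℂ z L : ℂ) = inner ℂ z ψ := (tendsto_nhds_unique tendsto_const_nhds h8).symm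
    have h10 : (inner ℂ L z : ℂ) = inner ℂ ψ z := by
      rw [← inner_conj_symm L z, h9, inner_conj_symm]
    rw [inner_sub_left, h10, sub_self]
  -- identify the limit with the projection
  have hKM : IsClosed ((K ⊓ M : Submodule ℂ E) : Set E) := by
    rw [Submodule.coe_inf]; exact hK.inter hM
  have hLmem : L ∈ (K ⊓ M).topologicalClosure :=
    (K ⊓ M).le_topologicalClosure ⟨hLK, hLM⟩
  have hproj : proj (K ⊓ M) ψ = L := by
    have := Submodule.eq_starProjection_of_mem_of_inner_eq_zero (K := (K ⊓ M).topologicalClosure)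
      (u := ψ) hLmem (fun w hw => by
        rw [hKM.submodule_topologicalClosure_eq] at hw
        exact hperp w hw)
    simp only [proj, ContinuousLinearMap.comp_apply]
    exact this
  -- (P ∘L Q)^(n+1) ψ = P (Q (y n))
  have hqsp : ∀ (n : ℕ) (x : E), Q ((S ^ n) (P (Q x))) = Q ((S ^ (n + 1)) x) := by
    intro n x
    cases n with
    | zero =>
      show Q (P (Q x)) = Q ((S ^ 1) x)
      rw [pow_one, hSapp, hq]
    | succ m =>
      rw [hpow_succ (m + 1) x, hSapp x, hpowQ m (P (Q x))]
  have hT : ∀ (n : ℕ) (x : E), ((P ∘L Q) ^ (n + 1)) x = P (Q ((S ^ n) x)) := by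
    intro n
    induction n with
    | zero => intro x; simp
    | succ n ih =>
      intro x
      have e : ((P ∘L Q) ^ (n + 1 + 1)) x = ((P ∘L Q) ^ (n + 1)) ((P ∘L Q) x) := by
        rw [pow_succ]; rfl
      rw [e, ih, ContinuousLinearMap.comp_apply, hqsp]
  have hTL : Tendsto (fun n : ℕ => ((P ∘L Q) ^ n) ψ) atTop (nhds L) := by
    rw [← Filter.tendsto_add_atTop_iff_nat 1]
    simp only [hT]
    have h11 : Tendsto (fun n => P (Q (y n))) atTop (nhds (P (Q L))) :=
      ((P.continuous.comp Q.continuous).tendsto L).comp hL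
    rw [hQL, hPL] at h11
    simpa only [hydef] using h11
  have hfin := Filter.Tendsto.inner (𝕜 := ℂ) (tendsto_const_nhds (x := φ)) hTL
  rw [hproj]
  exact hfin
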